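/- Let Z_1,...,Z_n be a martingale difference sequence in a Hilbert space (or a Banach space paired with its dual) with ‖Z_t‖ ≤ M_t almost surely, and let ŷ_1,...,ŷ_n be a predictable process (ŷ_t measurable with respect to σ(Z_1,...,Z_{t-1})) with ‖ŷ_t‖_* ≤ 1. Set A = ∑_{t=1}^n ⟨ŷ_t, Z_t⟩ and B² = 4∑_{t=1}^n (‖Z_t‖² + E[‖Z_t‖² | Z_1,...,Z_{t-1}]). Then E[exp(λA - λ²B²/2)] ≤ 1 for all λ ∈ R. -/

import Mathlib

open MeasureTheory Finset Filter Topology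


/-- Pointwise inequality: `exp (v - 2 v²) ≤ 1 + v + 2 v²`. -/
lemma exp_quad_bound (v : ℝ) : Real.exp (v - 2 * v ^ 2) ≤ 1 + v + 2 * v ^ 2 := by
  have h1 : 0 < 1 - (v - 2 * v ^ 2) := by nlinarith [sq_nonneg (v - 1/4)]
  have h2 : 1 - (v - 2 * v ^ 2) ≤ Real.exp (-(v - 2 * v ^ 2)) := by
    have := Real.add_one_le_exp (-(v - 2 * v ^ 2)); linarith
  have h3 : Real.exp (v - 2 * v ^ 2) ≤ 1 / (1 - (v - 2 * v ^ 2)) := by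
    rw [le_div_iff₀ h1]
    calc Real.exp (v - 2 * v ^ 2) * (1 - (v - 2 * v ^ 2))
        ≤ Real.exp (v - 2 * v ^ 2) * Real.exp (-(v - 2 * v ^ 2)) := by
          exact mul_le_mul_of_nonneg_left h2 (Real.exp_pos _).le
      _ = 1 := by rw [← Real.exp_add]; simp
  refine h3.trans ?_
  rw [div_le_iff₀ h1]
  nlinarith [sq_nonneg v, sq_nonneg (v * v)]


lemma indicator_pair_integral {Ω : Type*} {m0 : MeasurableSpace Ω} (μ : Measure Ω)
    {E : Type*} [NormedAddCommGroup E] [NormedSpace ℝ E] [CompleteSpace E]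
    {s : Set Ω} (hs : MeasurableSet s) {Z : Ω → E} (hZ : Integrable Z μ)
    (y : StrongDual ℝ E) :
    ∫ ω, s.indicator (fun ω' => y (Z ω')) ω ∂μ = y (∫ ω in s, Z ω ∂μ) := by
  rw [integral_indicator hs, ContinuousLinearMap.integral_comp_comm y hZ.integrableOn]

set_option maxHeartbeats 1000000 in
/-- Integral of a predictable dual pairing against a martingale difference vanishes. -/
lemma pair_integral_eq_zero {Ω : Type*} {m0 : MeasurableSpace Ω} (μ : Measure Ω)
    [IsProbabilityMeasure μ]
    {E : Type*} [NormedAddCommGroup E] [NormedSpace ℝ E] [CompleteSpace E]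
    {m : MeasurableSpace Ω} (hm : m ≤ m0)
    {Φ : Ω → StrongDual ℝ E} (hΦ : StronglyMeasurable[m] Φ)
    {C : ℝ} (hC0 : 0 ≤ C) (hC : ∀ᵐ ω ∂μ, ‖Φ ω‖ ≤ C)
    {Z : Ω → E} (hZ : Integrable Z μ) (hZ0 : μ[Z|m] =ᵐ[μ] 0) :
    ∫ ω, Φ ω (Z ω) ∂μ = 0 := by
  classical
  haveI : SigmaFinite (μ.trim hm) := by
    have : IsFiniteMeasure (μ.trim hm) := isFiniteMeasure_trim hm
    infer_instance
  set Φ' : Ω → StrongDual ℝ E := fun ω => if ‖Φ ω‖ ≤ C then Φ ω else 0 with hΦ'def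
  have hΦ'meas : StronglyMeasurable[m] Φ' := by
    refine StronglyMeasurable.ite ?_ hΦ stronglyMeasurable_const
    exact measurableSet_le hΦ.norm.measurable measurable_const
  have hΦ'bdd : ∀ ω, ‖Φ' ω‖ ≤ C := by
    intro ω; by_cases h : ‖Φ ω‖ ≤ C <;> simp [hΦ'def, h, hC0]
  have hΦ'ae : Φ' =ᵐ[μ] Φ := by filter_upwards [hC] with ω h; simp [hΦ'def, h]
  -- integral against any `m`-simple function vanishes
  have key : ∀ g : @SimpleFunc Ω m (StrongDual ℝ E), ∫ ω, (g ω) (Z ω) ∂μ = 0 := by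
    intro g
    have int_of : ∀ g' : @SimpleFunc Ω m (StrongDual ℝ E),
        Integrable (fun ω => (g' ω) (Z ω)) μ := by
      intro g'
      obtain ⟨Cg, hCg⟩ := SimpleFunc.exists_forall_norm_le g'
      refine Integrable.mono' (hZ.norm.const_mul Cg) ?_ ?_
      · exact isBoundedBilinearMap_apply.continuous.comp_aestronglyMeasurable
          (((g'.stronglyMeasurable.mono hm).aestronglyMeasurable).prodMk hZ.1)
      · exact Eventually.of_forall fun ω =>
          le_trans (ContinuousLinearMap.le_opNorm _ _)
            (mul_le_mul_of_nonneg_right (hCg ω) (norm_nonneg _))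
    refine SimpleFunc.induction ?_ ?_ g
    · intro y s hs
      have hs0 : MeasurableSet[m0] s := hm s hs
      have heq : (fun ω => ((SimpleFunc.piecewise s hs (SimpleFunc.const _ y)
          (SimpleFunc.const _ (0 : StrongDual ℝ E))) ω) (Z ω))
          = fun ω => s.indicator (fun ω' => y (Z ω')) ω := by
        ext ω
        by_cases hω : ω ∈ s <;>
          simp [SimpleFunc.piecewise_apply, hω, Set.indicator_of_mem, Set.indicator_of_notMem]
      rw [heq, indicator_pair_integral μ hs0 hZ y]
      have h2 : ∫ ω in s, Z ω ∂μ = 0 := by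
        rw [← setIntegral_condExp hm hZ hs]
        calc ∫ ω in s, (μ[Z|m]) ω ∂μ = ∫ _ω in s, (0 : E) ∂μ :=
              integral_congr_ae (ae_restrict_of_ae hZ0)
          _ = 0 := by simp
      rw [h2, map_zero]
    · intro f g _ hf hg
      have heq : (fun ω => ((f + g) ω) (Z ω))
          = fun ω => (f ω) (Z ω) + (g ω) (Z ω) := by
        ext ω; simp
      rw [heq, integral_add (int_of f) (int_of g), hf, hg, add_zero]
  -- approximate Φ' by simple functions and pass to the limit
  have keyk : ∀ k, ∫ ω, (hΦ'meas.approxBounded C k ω) (Z ω) ∂μ = 0 := fun k => key _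
  have hlim : Tendsto (fun k => ∫ ω, (hΦ'meas.approxBounded C k ω) (Z ω) ∂μ) atTop
      (𝓝 (∫ ω, (Φ' ω) (Z ω) ∂μ)) := by
    refine tendsto_integral_of_dominated_convergence (fun ω => C * ‖Z ω‖) ?_
      (hZ.norm.const_mul C) ?_ ?_
    · intro k
      exact isBoundedBilinearMap_apply.continuous.comp_aestronglyMeasurable
        ((((hΦ'meas.approxBounded C k).stronglyMeasurable.mono hm).aestronglyMeasurable).prodMk
          hZ.1)
    · intro k
      exact Eventually.of_forall fun ω =>
        le_trans (ContinuousLinearMap.le_opNorm _ _)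
          (mul_le_mul_of_nonneg_right (hΦ'meas.norm_approxBounded_le hC0 k ω) (norm_nonneg _))
    · refine Eventually.of_forall fun ω => ?_
      have h1 : Tendsto (fun k => hΦ'meas.approxBounded C k ω) atTop (𝓝 (Φ' ω)) :=
        hΦ'meas.tendsto_approxBounded_of_norm_le (hΦ'bdd ω)
      exact (isBoundedBilinearMap_apply.continuous.tendsto (Φ' ω, Z ω)).comp
        (h1.prodMk_nhds tendsto_const_nhds)
  have h0 : Tendsto (fun k => ∫ ω, (hΦ'meas.approxBounded C k ω) (Z ω) ∂μ) atTop (𝓝 0) := by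
    simp only [keyk]; exact tendsto_const_nhds
  have hΦ'0 : ∫ ω, (Φ' ω) (Z ω) ∂μ = 0 := tendsto_nhds_unique hlim h0
  calc ∫ ω, (Φ ω) (Z ω) ∂μ = ∫ ω, (Φ' ω) (Z ω) ∂μ := by
        refine integral_congr_ae ?_
        filter_upwards [hΦ'ae] with ω h; rw [h]
    _ = 0 := hΦ'0

set_option maxHeartbeats 1000000 in
/-- One supermartingale step. -/
lemma step_lemma {Ω : Type*} {m0 : MeasurableSpace Ω} (μ : Measure Ω)
    [IsProbabilityMeasure μ]
    {E : Type*} [NormedAddCommGroup E] [NormedSpace ℝ E] [CompleteSpace E]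
    {m : MeasurableSpace Ω} (hm : m ≤ m0)
    {G : Ω → ℝ} (hGmeas : StronglyMeasurable[m] G)
    (hGpos : ∀ ω, 0 ≤ G ω) {K : ℝ} (hK0 : 0 ≤ K) (hGbdd : ∀ᵐ ω ∂μ, G ω ≤ K)
    (hGint : ∫ ω, G ω ∂μ ≤ 1)
    {Z : Ω → E} (hZint : Integrable Z μ) (hZ0 : μ[Z|m] =ᵐ[μ] 0)
    {MZ : ℝ} (hZbdd : ∀ᵐ ω ∂μ, ‖Z ω‖ ≤ MZ)
    {y : Ω → StrongDual ℝ E} (hymeas : StronglyMeasurable[m] y)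
    (hybdd : ∀ ω, ‖y ω‖ ≤ 1) (l : ℝ) :
    ∫ ω, G ω * Real.exp (l * y ω (Z ω)
      - 2 * l ^ 2 * (‖Z ω‖ ^ 2 + (μ[fun ω' => ‖Z ω'‖ ^ 2|m]) ω)) ∂μ ≤ 1 := by
  classical
  haveI : SigmaFinite (μ.trim hm) := by
    have : IsFiniteMeasure (μ.trim hm) := isFiniteMeasure_trim hm
    infer_instance
  set c : Ω → ℝ := μ[fun ω' => ‖Z ω'‖ ^ 2|m] with hcdef
  -- basic facts
  have hq_meas : AEStronglyMeasurable[m0] (fun ω => ‖Z ω‖ ^ 2) μ := (hZint.1.norm.pow 2)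
  have hq_int : Integrable (fun ω => ‖Z ω‖ ^ 2) μ := by
    refine Integrable.mono' (integrable_const (MZ ^ 2)) hq_meas ?_
    filter_upwards [hZbdd] with ω h
    rw [Real.norm_eq_abs, abs_of_nonneg (by positivity)]
    have h0 : (0:ℝ) ≤ ‖Z ω‖ := norm_nonneg _
    nlinarith
  have hc_meas : StronglyMeasurable[m] c := stronglyMeasurable_condExp
  have hc_int : Integrable c μ := integrable_condExp
  have hc_nonneg : ∀ᵐ ω ∂μ, 0 ≤ c ω :=
    condExp_nonneg (Eventually.of_forall fun ω => by positivity)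
  -- the predictable factor D
  set D : Ω → ℝ := fun ω => G ω * Real.exp (-(2 * l ^ 2) * c ω) with hDdef
  have hD_meas : StronglyMeasurable[m] D :=
    hGmeas.mul (Real.continuous_exp.comp_stronglyMeasurable (hc_meas.const_mul (-(2 * l ^ 2))))
  have hD_nonneg : ∀ ω, 0 ≤ D ω := fun ω => mul_nonneg (hGpos ω) (Real.exp_pos _).le
  have hD_bdd : ∀ᵐ ω ∂μ, ‖D ω‖ ≤ K := by
    filter_upwards [hGbdd, hc_nonneg] with ω h1 h2
    rw [Real.norm_eq_abs, abs_of_nonneg (hD_nonneg ω)]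
    have he : Real.exp (-(2 * l ^ 2) * c ω) ≤ 1 := by
      rw [Real.exp_le_one_iff]
      have : (0:ℝ) ≤ 2 * l ^ 2 * c ω := by positivity
      linarith
    calc D ω ≤ G ω * 1 := mul_le_mul_of_nonneg_left he (hGpos ω)
      _ = G ω := mul_one _
      _ ≤ K := h1
  have hD_int : Integrable D μ :=
    Integrable.mono' (integrable_const K) (hD_meas.mono hm).aestronglyMeasurable hD_bdd
  -- pairing
  have ha_meas : AEStronglyMeasurable[m0] (fun ω => y ω (Z ω)) μ :=
    isBoundedBilinearMap_apply.continuous.comp_aestronglyMeasurable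
      (((hymeas.mono hm).aestronglyMeasurable).prodMk hZint.1)
  have ha_bdd : ∀ ω, |y ω (Z ω)| ≤ ‖Z ω‖ := by
    intro ω
    calc |y ω (Z ω)| = ‖y ω (Z ω)‖ := rfl
      _ ≤ ‖y ω‖ * ‖Z ω‖ := (y ω).le_opNorm _
      _ ≤ 1 * ‖Z ω‖ := mul_le_mul_of_nonneg_right (hybdd ω) (norm_nonneg _)
      _ = ‖Z ω‖ := one_mul _
  have ha_int : Integrable (fun ω => y ω (Z ω)) μ := by
    refine Integrable.mono' hZint.norm ha_meas ?_
    exact Eventually.of_forall fun ω => by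
      rw [Real.norm_eq_abs]; exact (ha_bdd ω).trans (le_of_eq rfl)
  -- pointwise exponential bound
  have hpoint : ∀ ω, Real.exp (l * y ω (Z ω) - 2 * l ^ 2 * ‖Z ω‖ ^ 2)
      ≤ 1 + l * y ω (Z ω) + 2 * l ^ 2 * ‖Z ω‖ ^ 2 := by
    intro ω
    set v : ℝ := l * y ω (Z ω) with hv
    have h2 : v ^ 2 ≤ l ^ 2 * ‖Z ω‖ ^ 2 := by
      have h3 := ha_bdd ω
      have h4 : (y ω (Z ω)) ^ 2 ≤ ‖Z ω‖ ^ 2 := by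
        have := abs_nonneg (y ω (Z ω)); nlinarith [sq_abs (y ω (Z ω))]
      calc v ^ 2 = l ^ 2 * (y ω (Z ω)) ^ 2 := by rw [hv]; ring
        _ ≤ l ^ 2 * ‖Z ω‖ ^ 2 := by nlinarith [sq_nonneg l]
    calc Real.exp (v - 2 * l ^ 2 * ‖Z ω‖ ^ 2) ≤ Real.exp (v - 2 * v ^ 2) := by
          rw [Real.exp_le_exp]; nlinarith
      _ ≤ 1 + v + 2 * v ^ 2 := exp_quad_bound v
      _ ≤ 1 + v + 2 * l ^ 2 * ‖Z ω‖ ^ 2 := by nlinarith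
  -- integrability of the various integrands
  have hDa_int : Integrable (fun ω => D ω * y ω (Z ω)) μ := ha_int.bdd_mul (hD_meas.mono hm).aestronglyMeasurable hD_bdd
  have hDq_int : Integrable (fun ω => D ω * ‖Z ω‖ ^ 2) μ := hq_int.bdd_mul (hD_meas.mono hm).aestronglyMeasurable hD_bdd
  have hDc_int : Integrable (fun ω => D ω * c ω) μ := hc_int.bdd_mul (hD_meas.mono hm).aestronglyMeasurable hD_bdd
  have hsum_int : Integrable (fun ω => D ω * (1 + l * y ω (Z ω) + 2 * l ^ 2 * ‖Z ω‖ ^ 2)) μ := by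
    have : (fun ω => D ω * (1 + l * y ω (Z ω) + 2 * l ^ 2 * ‖Z ω‖ ^ 2))
        = fun ω => D ω + l * (D ω * y ω (Z ω)) + 2 * l ^ 2 * (D ω * ‖Z ω‖ ^ 2) := by
      ext ω; ring
    rw [this]
    exact ((hD_int.add (hDa_int.const_mul l)).add (hDq_int.const_mul (2 * l ^ 2)))
  -- the goal integrand, rewritten
  have hgoal_meas : AEStronglyMeasurable[m0]
      (fun ω => D ω * Real.exp (l * y ω (Z ω) - 2 * l ^ 2 * ‖Z ω‖ ^ 2)) μ := by
    refine ((hD_meas.mono hm).aestronglyMeasurable.mul ?_)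
    exact Real.continuous_exp.comp_aestronglyMeasurable
      (((ha_meas.const_mul l).sub (hq_meas.const_mul (2 * l ^ 2))))
  have hgoal_int : Integrable
      (fun ω => D ω * Real.exp (l * y ω (Z ω) - 2 * l ^ 2 * ‖Z ω‖ ^ 2)) μ := by
    refine Integrable.mono' (integrable_const (K * Real.exp (|l| * MZ))) hgoal_meas ?_
    filter_upwards [hD_bdd, hZbdd] with ω h1 h2
    rw [Real.norm_eq_abs, abs_of_nonneg (mul_nonneg (hD_nonneg ω) (Real.exp_pos _).le)]
    have hexp : Real.exp (l * y ω (Z ω) - 2 * l ^ 2 * ‖Z ω‖ ^ 2) ≤ Real.exp (|l| * MZ) := by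
      rw [Real.exp_le_exp]
      have h3 : l * y ω (Z ω) ≤ |l| * ‖Z ω‖ := by
        calc l * y ω (Z ω) ≤ |l * y ω (Z ω)| := le_abs_self _
          _ = |l| * |y ω (Z ω)| := abs_mul _ _
          _ ≤ |l| * ‖Z ω‖ := mul_le_mul_of_nonneg_left (ha_bdd ω) (abs_nonneg _)
      have h4 : |l| * ‖Z ω‖ ≤ |l| * MZ := mul_le_mul_of_nonneg_left h2 (abs_nonneg _)
      nlinarith [sq_nonneg (l * ‖Z ω‖), sq_nonneg l, sq_nonneg (‖Z ω‖)]
    calc D ω * Real.exp (l * y ω (Z ω) - 2 * l ^ 2 * ‖Z ω‖ ^ 2)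
        ≤ K * Real.exp (l * y ω (Z ω) - 2 * l ^ 2 * ‖Z ω‖ ^ 2) := by
          refine mul_le_mul_of_nonneg_right ?_ (Real.exp_pos _).le
          rw [Real.norm_eq_abs, abs_of_nonneg (hD_nonneg ω)] at h1; exact h1
      _ ≤ K * Real.exp (|l| * MZ) := mul_le_mul_of_nonneg_left hexp hK0
  -- Step 0: rewrite goal integrand
  have heq1 : ∀ ω, G ω * Real.exp (l * y ω (Z ω) - 2 * l ^ 2 * (‖Z ω‖ ^ 2 + c ω))
      = D ω * Real.exp (l * y ω (Z ω) - 2 * l ^ 2 * ‖Z ω‖ ^ 2) := by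
    intro ω
    show G ω * Real.exp (l * y ω (Z ω) - 2 * l ^ 2 * (‖Z ω‖ ^ 2 + c ω))
        = G ω * Real.exp (-(2 * l ^ 2) * c ω)
          * Real.exp (l * y ω (Z ω) - 2 * l ^ 2 * ‖Z ω‖ ^ 2)
    rw [mul_assoc (G ω), ← Real.exp_add]
    congr 2
    ring
  -- key integrals
  have hI2 : ∫ ω, D ω * y ω (Z ω) ∂μ = 0 := by
    have heq : ∀ ω, D ω * y ω (Z ω) = (D ω • y ω) (Z ω) := by
      intro ω; simp [ContinuousLinearMap.smul_apply, smul_eq_mul]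
    calc ∫ ω, D ω * y ω (Z ω) ∂μ = ∫ ω, (D ω • y ω) (Z ω) ∂μ :=
          integral_congr_ae (Eventually.of_forall fun ω => heq ω)
      _ = 0 := by
        refine pair_integral_eq_zero μ hm (hD_meas.smul hymeas) hK0 ?_ hZint hZ0
        filter_upwards [hD_bdd] with ω h1
        calc ‖D ω • y ω‖ = ‖D ω‖ * ‖y ω‖ := norm_smul _ _
          _ ≤ K * 1 := mul_le_mul h1 (hybdd ω) (norm_nonneg _) hK0
          _ = K := mul_one _
  have hI3 : ∫ ω, D ω * ‖Z ω‖ ^ 2 ∂μ = ∫ ω, D ω * c ω ∂μ := by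
    have h := condExp_stronglyMeasurable_mul_of_bound hm hD_meas hq_int K hD_bdd
    calc ∫ ω, D ω * ‖Z ω‖ ^ 2 ∂μ
        = ∫ ω, (μ[D * fun ω' => ‖Z ω'‖ ^ 2|m]) ω ∂μ :=
          (integral_condExp hm (f := D * fun ω' => ‖Z ω'‖ ^ 2)).symm
      _ = ∫ ω, D ω * c ω ∂μ := integral_congr_ae h
  -- final supermartingale inequality
  have hfinal : ∫ ω, (D ω + 2 * l ^ 2 * (D ω * c ω)) ∂μ ≤ ∫ ω, G ω ∂μ := by
    refine integral_mono_ae (hD_int.add (hDc_int.const_mul (2 * l ^ 2))) (by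
      exact Integrable.mono' (integrable_const K) (hGmeas.mono hm).aestronglyMeasurable (by
        filter_upwards [hGbdd] with ω h; rw [Real.norm_eq_abs, abs_of_nonneg (hGpos ω)]; exact h)) ?_
    filter_upwards [hc_nonneg] with ω h2
    set x : ℝ := 2 * l ^ 2 * c ω with hx
    have hx0 : 0 ≤ x := by positivity
    have hkey : Real.exp (-x) * (1 + x) ≤ 1 := by
      have h3 : 1 + x ≤ Real.exp x := by linarith [Real.add_one_le_exp x]
      calc Real.exp (-x) * (1 + x) ≤ Real.exp (-x) * Real.exp x :=
            mul_le_mul_of_nonneg_left h3 (Real.exp_pos _).le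
        _ = 1 := by rw [← Real.exp_add]; simp
    have hDx : D ω + 2 * l ^ 2 * (D ω * c ω) = G ω * (Real.exp (-x) * (1 + x)) := by
      show G ω * Real.exp (-(2 * l ^ 2) * c ω)
          + 2 * l ^ 2 * (G ω * Real.exp (-(2 * l ^ 2) * c ω) * c ω) = _
      rw [show -(2 * l ^ 2) * c ω = -x by rw [hx]; ring, hx]
      ring
    rw [hDx]
    calc G ω * (Real.exp (-x) * (1 + x)) ≤ G ω * 1 :=
          mul_le_mul_of_nonneg_left hkey (hGpos ω)
      _ = G ω := mul_one _
  -- chain everything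
  calc ∫ ω, G ω * Real.exp (l * y ω (Z ω) - 2 * l ^ 2 * (‖Z ω‖ ^ 2 + c ω)) ∂μ
      = ∫ ω, D ω * Real.exp (l * y ω (Z ω) - 2 * l ^ 2 * ‖Z ω‖ ^ 2) ∂μ :=
        integral_congr_ae (Eventually.of_forall heq1)
    _ ≤ ∫ ω, D ω * (1 + l * y ω (Z ω) + 2 * l ^ 2 * ‖Z ω‖ ^ 2) ∂μ := by
        refine integral_mono_ae hgoal_int hsum_int ?_
        exact Eventually.of_forall fun ω =>
          mul_le_mul_of_nonneg_left (hpoint ω) (hD_nonneg ω)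
    _ = ∫ ω, (D ω + l * (D ω * y ω (Z ω)) + 2 * l ^ 2 * (D ω * ‖Z ω‖ ^ 2)) ∂μ :=
        integral_congr_ae (Eventually.of_forall fun ω => by ring)
    _ = (∫ ω, (D ω + l * (D ω * y ω (Z ω))) ∂μ)
        + ∫ ω, 2 * l ^ 2 * (D ω * ‖Z ω‖ ^ 2) ∂μ :=
        integral_add (f := fun ω => D ω + l * (D ω * y ω (Z ω)))
          (g := fun ω => 2 * l ^ 2 * (D ω * ‖Z ω‖ ^ 2))
          (hD_int.add (hDa_int.const_mul l)) (hDq_int.const_mul (2 * l ^ 2))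
    _ = (∫ ω, D ω ∂μ) + l * (∫ ω, D ω * y ω (Z ω) ∂μ)
        + 2 * l ^ 2 * (∫ ω, D ω * ‖Z ω‖ ^ 2 ∂μ) := by
        rw [integral_add (f := D) (g := fun ω => l * (D ω * y ω (Z ω))) hD_int
          (hDa_int.const_mul l), integral_const_mul, integral_const_mul]
    _ = (∫ ω, D ω ∂μ) + 2 * l ^ 2 * (∫ ω, D ω * c ω ∂μ) := by rw [hI2, hI3]; ring
    _ = ∫ ω, (D ω + 2 * l ^ 2 * (D ω * c ω)) ∂μ := by
        rw [integral_add (f := D) (g := fun ω => 2 * l ^ 2 * (D ω * c ω)) hD_int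
          (hDc_int.const_mul (2 * l ^ 2)), integral_const_mul]
    _ ≤ ∫ ω, G ω ∂μ := hfinal
    _ ≤ 1 := hGint

set_option maxHeartbeats 1000000 in
/-- The canonical exponential moment condition for the pair `(A, B)` built from a bounded
martingale difference sequence `Z` in a separable Banach space and a predictable process
`yhat` in the dual unit ball: with `A = ∑ ⟨yhat_t, Z_t⟩` and
`B² = 4 ∑ (‖Z_t‖² + E[‖Z_t‖² | past])`, one has `E[exp(λA - λ²B²/2)] ≤ 1` for all `λ`. -/
theorem stmt6 {Ω : Type*} {m0 : MeasurableSpace Ω} (μ : Measure Ω)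
    [IsProbabilityMeasure μ]
    {E : Type*} [NormedAddCommGroup E] [NormedSpace ℝ E] [CompleteSpace E]
    [MeasurableSpace E] [BorelSpace E] [SecondCountableTopology E]
    (ℱ : Filtration ℕ m0) (n : ℕ)
    (Z : ℕ → Ω → E) (M : ℕ → ℝ)
    (hadapt : ∀ t, StronglyMeasurable[ℱ (t + 1)] (Z (t + 1)))
    (hint : ∀ t, Integrable (Z (t + 1)) μ)
    (hmds : ∀ t, μ[Z (t + 1) | ℱ t] =ᵐ[μ] 0)
    (hbdd : ∀ t, ∀ᵐ ω ∂μ, ‖Z (t + 1) ω‖ ≤ M t)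
    (yhat : ℕ → Ω → StrongDual ℝ E)
    (hpred : ∀ t, StronglyMeasurable[ℱ t] (yhat (t + 1)))
    (hyball : ∀ t ω, ‖yhat (t + 1) ω‖ ≤ 1) :
    ∀ l : ℝ,
      ∫ ω, Real.exp (l * (∑ t ∈ Finset.range n, yhat (t + 1) ω (Z (t + 1) ω))
        - l ^ 2 * (4 * ∑ t ∈ Finset.range n,
            (‖Z (t + 1) ω‖ ^ 2 + (μ[fun ω' => ‖Z (t + 1) ω'‖ ^ 2 | ℱ t]) ω)) / 2) ∂μ
        ≤ 1 := by
  intro l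
  -- notation
  have main : ∀ N : ℕ,
      ∫ ω, Real.exp (l * (∑ t ∈ Finset.range N, yhat (t + 1) ω (Z (t + 1) ω))
        - 2 * l ^ 2 * (∑ t ∈ Finset.range N,
            (‖Z (t + 1) ω‖ ^ 2 + (μ[fun ω' => ‖Z (t + 1) ω'‖ ^ 2 | ℱ t]) ω))) ∂μ ≤ 1 := by
    intro N
    induction N with
    | zero => simp
    | succ N ih =>
      -- the running exponential factor
      set G : Ω → ℝ := fun ω =>
        Real.exp (l * (∑ t ∈ Finset.range N, yhat (t + 1) ω (Z (t + 1) ω))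
          - 2 * l ^ 2 * (∑ t ∈ Finset.range N,
              (‖Z (t + 1) ω‖ ^ 2 + (μ[fun ω' => ‖Z (t + 1) ω'‖ ^ 2 | ℱ t]) ω))) with hGdef
      have hGmeas : StronglyMeasurable[ℱ N] G := by
        refine Real.continuous_exp.comp_stronglyMeasurable (StronglyMeasurable.sub ?_ ?_)
        · refine StronglyMeasurable.const_mul ?_ l
          refine Finset.stronglyMeasurable_fun_sum _ fun t ht => ?_
          have ht' : t + 1 ≤ N := Finset.mem_range.mp ht
          exact isBoundedBilinearMap_apply.continuous.comp_stronglyMeasurable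
            (((hpred t).mono (ℱ.mono (le_trans (Nat.le_succ t) ht'))).prodMk
              ((hadapt t).mono (ℱ.mono ht')))
        · refine StronglyMeasurable.const_mul ?_ (2 * l ^ 2)
          refine Finset.stronglyMeasurable_fun_sum _ fun t ht => ?_
          have ht' : t + 1 ≤ N := Finset.mem_range.mp ht
          refine StronglyMeasurable.add ?_ ?_
          · exact ((hadapt t).mono (ℱ.mono ht')).norm.pow 2
          · exact stronglyMeasurable_condExp.mono (ℱ.mono (le_trans (Nat.le_succ t) ht'))
      have hGpos : ∀ ω, 0 ≤ G ω := fun ω => (Real.exp_pos _).le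
      -- a.e. bound on G
      have hc_nonneg : ∀ t, ∀ᵐ ω ∂μ,
          0 ≤ (μ[fun ω' => ‖Z (t + 1) ω'‖ ^ 2 | ℱ t]) ω := fun t =>
        condExp_nonneg (Eventually.of_forall fun ω => by positivity)
      have hGbdd : ∀ᵐ ω ∂μ, G ω ≤ Real.exp (∑ t ∈ Finset.range N, |l| * M t) := by
        have h1 : ∀ᵐ ω ∂μ, ∀ t, ‖Z (t + 1) ω‖ ≤ M t := ae_all_iff.mpr hbdd
        have h2 : ∀ᵐ ω ∂μ, ∀ t, 0 ≤ (μ[fun ω' => ‖Z (t + 1) ω'‖ ^ 2 | ℱ t]) ω :=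
          ae_all_iff.mpr hc_nonneg
        filter_upwards [h1, h2] with ω hZω hcω
        rw [hGdef]
        simp only []
        rw [Real.exp_le_exp]
        have hsum1 : l * (∑ t ∈ Finset.range N, yhat (t + 1) ω (Z (t + 1) ω))
            ≤ ∑ t ∈ Finset.range N, |l| * M t := by
          calc l * (∑ t ∈ Finset.range N, yhat (t + 1) ω (Z (t + 1) ω))
              ≤ |l * (∑ t ∈ Finset.range N, yhat (t + 1) ω (Z (t + 1) ω))| := le_abs_self _
            _ = |l| * |∑ t ∈ Finset.range N, yhat (t + 1) ω (Z (t + 1) ω)| := abs_mul _ _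
            _ ≤ |l| * ∑ t ∈ Finset.range N, |yhat (t + 1) ω (Z (t + 1) ω)| :=
                mul_le_mul_of_nonneg_left (Finset.abs_sum_le_sum_abs _ _) (abs_nonneg _)
            _ ≤ |l| * ∑ t ∈ Finset.range N, M t := by
                refine mul_le_mul_of_nonneg_left ?_ (abs_nonneg _)
                refine Finset.sum_le_sum fun t _ => ?_
                calc |yhat (t + 1) ω (Z (t + 1) ω)| = ‖yhat (t + 1) ω (Z (t + 1) ω)‖ := rfl
                  _ ≤ ‖yhat (t + 1) ω‖ * ‖Z (t + 1) ω‖ := (yhat (t + 1) ω).le_opNorm _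
                  _ ≤ 1 * ‖Z (t + 1) ω‖ :=
                      mul_le_mul_of_nonneg_right (hyball t ω) (norm_nonneg _)
                  _ = ‖Z (t + 1) ω‖ := one_mul _
                  _ ≤ M t := hZω t
            _ = ∑ t ∈ Finset.range N, |l| * M t := by rw [Finset.mul_sum]
        have hsum2 : 0 ≤ ∑ t ∈ Finset.range N,
            (‖Z (t + 1) ω‖ ^ 2 + (μ[fun ω' => ‖Z (t + 1) ω'‖ ^ 2 | ℱ t]) ω) := by
          refine Finset.sum_nonneg fun t _ => ?_
          have := hcω t; positivity
        nlinarith [sq_nonneg l]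
      -- apply the step lemma
      have hstep := step_lemma μ (ℱ.le N) hGmeas hGpos (Real.exp_pos _).le hGbdd ih
        (hint N) (hmds N) (hbdd N) (hpred N) (hyball N) l
      -- rewrite the goal integrand
      refine le_trans (le_of_eq (integral_congr_ae (Eventually.of_forall fun ω => ?_))) hstep
      show Real.exp (l * (∑ t ∈ Finset.range (N + 1), yhat (t + 1) ω (Z (t + 1) ω))
          - 2 * l ^ 2 * (∑ t ∈ Finset.range (N + 1),
              (‖Z (t + 1) ω‖ ^ 2 + (μ[fun ω' => ‖Z (t + 1) ω'‖ ^ 2 | ℱ t]) ω)))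
        = Real.exp (l * (∑ t ∈ Finset.range N, yhat (t + 1) ω (Z (t + 1) ω))
          - 2 * l ^ 2 * (∑ t ∈ Finset.range N,
              (‖Z (t + 1) ω‖ ^ 2 + (μ[fun ω' => ‖Z (t + 1) ω'‖ ^ 2 | ℱ t]) ω)))
          * Real.exp (l * yhat (N + 1) ω (Z (N + 1) ω)
            - 2 * l ^ 2 * (‖Z (N + 1) ω‖ ^ 2 + (μ[fun ω' => ‖Z (N + 1) ω'‖ ^ 2 | ℱ N]) ω))
      rw [← Real.exp_add, Finset.sum_range_succ, Finset.sum_range_succ]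
      congr 1
      ring
  refine le_trans (le_of_eq (integral_congr_ae (Eventually.of_forall fun ω => ?_))) (main n)
  show Real.exp (l * (∑ t ∈ Finset.range n, yhat (t + 1) ω (Z (t + 1) ω))
      - l ^ 2 * (4 * ∑ t ∈ Finset.range n,
          (‖Z (t + 1) ω‖ ^ 2 + (μ[fun ω' => ‖Z (t + 1) ω'‖ ^ 2 | ℱ t]) ω)) / 2)
    = Real.exp (l * (∑ t ∈ Finset.range n, yhat (t + 1) ω (Z (t + 1) ω))
      - 2 * l ^ 2 * (∑ t ∈ Finset.range n,
          (‖Z (t + 1) ω‖ ^ 2 + (μ[fun ω' => ‖Z (t + 1) ω'‖ ^ 2 | ℱ t]) ω)))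
  congr 1
  ring
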